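/- Let (A, A*) be a Leonard pair on a (d+1)-dimensional K-vector space with eigenvalues θ_0, ..., θ_d of A (ordered by the basis diagonalizing A in which A* is irreducible tridiagonal). Given β, γ, ϱ ∈ K, define P(x,y) = x² − βxy + y² − γ(x+y) − ϱ. Then [A, A²A* − β·AA*A + A*A² − γ·(AA* + A*A) − ϱ·A*] = 0 if and only if P(θ_{i−1}, θ_i) = 0 for 1 ≤ i ≤ d. -/

import Mathlib

/-- A square matrix is irreducible tridiagonal: nonzero entries lie within
distance one of the diagonal, and all sub- and superdiagonal entries are nonzero. -/
def IsIrreducibleTridiagonal {K : Type*} [Field K] {n : ℕ}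
    (M : Matrix (Fin n) (Fin n) K) : Prop :=
  (∀ i j : Fin n, ((i : ℕ) + 1 < j ∨ (j : ℕ) + 1 < i) → M i j = 0) ∧
  (∀ i j : Fin n, ((i : ℕ) + 1 = j ∨ (j : ℕ) + 1 = i) → M i j ≠ 0)

/-- A vector in the kernel of a matrix whose above-superdiagonal entries vanish and
whose superdiagonal entries are nonzero, with first coordinate zero, is zero. -/
lemma tridiag_ker {K : Type*} [Field K] {n : ℕ} (S : Matrix (Fin (n + 1)) (Fin (n + 1)) K)
    (h0 : ∀ i j : Fin (n + 1), (i : ℕ) + 1 < j → S i j = 0)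
    (h1 : ∀ i j : Fin (n + 1), (i : ℕ) + 1 = j → S i j ≠ 0)
    (v : Fin (n + 1) → K) (hv : S.mulVec v = 0) (hv0 : v 0 = 0) : v = 0 := by
  have key : ∀ k : ℕ, ∀ hk : k < n + 1, v ⟨k, hk⟩ = 0 := by
    intro k
    induction k using Nat.strong_induction_on with
    | _ k IH =>
      intro hk
      match k, hk with
      | 0, hk => exact hv0
      | (m + 1), hk =>
        have hrow := congrFun hv ⟨m, by omega⟩
        simp only [Matrix.mulVec, dotProduct, Pi.zero_apply] at hrow
        rw [Finset.sum_eq_single (⟨m + 1, hk⟩ : Fin (n + 1))] at hrow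
        · exact (mul_eq_zero.mp hrow).resolve_left (h1 _ _ rfl)
        · intro j _ hj
          rcases lt_or_ge (j : ℕ) (m + 1) with h | h
          · have : v j = 0 := by
              have := IH j (by omega) j.isLt
              simpa using this
            rw [this, mul_zero]
          · have hgt : (m : ℕ) + 1 < (j : ℕ) := by
              rcases lt_or_eq_of_le h with h' | h'
              · exact h'
              · exact absurd (Fin.ext h'.symm) hj
            rw [h0 _ _ hgt, zero_mul]
        · intro h; exact absurd (Finset.mem_univ _) h
  funext i
  have := key i.val i.isLt
  simpa using this

theorem stmt_11 {K V : Type*} [Field K] [AddCommGroup V] [Module K V]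
    (d : ℕ) (A B : Module.End K V)
    (c : Module.Basis (Fin (d + 1)) K V)
    (hAdiag : (LinearMap.toMatrix c c A).IsDiag)
    (hBtri : IsIrreducibleTridiagonal (LinearMap.toMatrix c c B))
    (hLP : ∃ b : Module.Basis (Fin (d + 1)) K V,
      IsIrreducibleTridiagonal (LinearMap.toMatrix b b A) ∧
      (LinearMap.toMatrix b b B).IsDiag)
    (θ : Fin (d + 1) → K) (hθ : ∀ i, θ i = LinearMap.toMatrix c c A i i)
    (β γ ϱ : K) (P : K → K → K)
    (hP : ∀ x y, P x y = x ^ 2 - β * x * y + y ^ 2 - γ * (x + y) - ϱ) :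
    (A * (A ^ 2 * B - β • (A * B * A) + B * A ^ 2 - γ • (A * B + B * A) - ϱ • B) =
      (A ^ 2 * B - β • (A * B * A) + B * A ^ 2 - γ • (A * B + B * A) - ϱ • B) * A) ↔
    (∀ i : ℕ, (h : i < d) →
      P (θ ⟨i, by omega⟩) (θ ⟨i + 1, by omega⟩) = 0) := by
  classical
  -- A acts diagonally on the basis c
  have hAc : ∀ j : Fin (d + 1), A (c j) = θ j • c j := by
    intro j
    apply c.repr.injective
    ext k
    rw [map_smul, Finsupp.smul_apply, Module.Basis.repr_self,
      ← LinearMap.toMatrix_apply c c A k j]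
    by_cases h : k = j
    · subst h
      rw [Finsupp.single_apply, if_pos rfl, smul_eq_mul, mul_one, hθ]
    · rw [hAdiag h, Finsupp.single_apply, if_neg (Ne.symm h), smul_eq_mul, mul_zero]
  -- adjacent eigenvalues are distinct
  have hdist : ∀ i : ℕ, (h : i < d) → θ ⟨i, by omega⟩ ≠ θ ⟨i + 1, by omega⟩ := by
    intro i hi heq
    obtain ⟨b, hbA, -⟩ := hLP
    set lam := θ ⟨i, by omega⟩ with hlam
    set f : Module.End K V := A - lam • 1 with hf
    have hfc : ∀ j : Fin (d + 1), θ j = lam → f (c j) = 0 := by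
      intro j hj
      simp [hf, LinearMap.sub_apply, hAc j, hj]
    set S := LinearMap.toMatrix b b f with hS
    have hSmat : S = LinearMap.toMatrix b b A - lam • 1 := by
      simp [hS, hf, map_sub, map_smul, LinearMap.toMatrix_one]
    have hSoff : ∀ p q : Fin (d + 1), (p : ℕ) + 1 < q → S p q = 0 := by
      intro p q hpq
      have hne : p ≠ q := by
        intro h; subst h; omega
      rw [hSmat]
      simp [Matrix.sub_apply, Matrix.smul_apply, Matrix.one_apply_ne hne,
        hbA.1 p q (Or.inl hpq)]
    have hSsup : ∀ p q : Fin (d + 1), (p : ℕ) + 1 = q → S p q ≠ 0 := by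
      intro p q hpq
      have hne : p ≠ q := by
        intro h; subst h; omega
      rw [hSmat]
      simpa [Matrix.sub_apply, Matrix.smul_apply, Matrix.one_apply_ne hne]
        using hbA.2 p q (Or.inl hpq)
    set u : Fin (d + 1) → K := ⇑(b.repr (c ⟨i, by omega⟩)) with hu
    set w : Fin (d + 1) → K := ⇑(b.repr (c ⟨i + 1, by omega⟩)) with hw
    have hku : S.mulVec u = 0 := by
      rw [hu, hS, LinearMap.toMatrix_mulVec_repr, hfc _ rfl]
      simp
    have hkw : S.mulVec w = 0 := by
      rw [hw, hS, LinearMap.toMatrix_mulVec_repr, hfc _ heq.symm]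
      simp
    by_cases hu0 : u 0 = 0
    · have hz := tridiag_ker S hSoff hSsup u hku hu0
      have h0 : b.repr (c ⟨i, by omega⟩) = 0 := by
        ext k; exact congrFun hz k
      exact c.ne_zero _ (b.repr.injective (by simpa using h0))
    · set z : Fin (d + 1) → K := u 0 • w - w 0 • u with hz
      have hkz : S.mulVec z = 0 := by
        rw [hz, Matrix.mulVec_sub, Matrix.mulVec_smul, Matrix.mulVec_smul, hku, hkw]
        simp
      have hz0 : z 0 = 0 := by
        simp only [hz, Pi.sub_apply, Pi.smul_apply, smul_eq_mul]
        ring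
      have hzz := tridiag_ker S hSoff hSsup z hkz hz0
      have heqv : u 0 • c ⟨i + 1, by omega⟩ = w 0 • c ⟨i, by omega⟩ := by
        apply b.repr.injective
        ext k
        have hk := congrFun hzz k
        simp only [hz, Pi.sub_apply, Pi.smul_apply, smul_eq_mul, Pi.zero_apply] at hk
        simp only [map_smul, Finsupp.smul_apply, smul_eq_mul]
        rw [← hu, ← hw]
        linear_combination hk
      have hev := congrArg (fun x => (c.repr x) ⟨i + 1, by omega⟩) heqv
      have hne : (⟨i, by omega⟩ : Fin (d + 1)) ≠ (⟨i + 1, by omega⟩ : Fin (d + 1)) := by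
        intro h
        have := congrArg Fin.val h
        simp at this
      simp only [map_smul, Module.Basis.repr_self, Finsupp.smul_apply, smul_eq_mul,
        Finsupp.single_apply] at hev
      rw [if_neg hne, mul_zero] at hev
      exact hu0 (by simpa using hev)
  set M := LinearMap.toMatrix c c A with hM
  set N := LinearMap.toMatrix c c B with hN
  -- matrix multiplication entry lemmas
  have hL : ∀ (Y : Matrix (Fin (d + 1)) (Fin (d + 1)) K) (i j : Fin (d + 1)),
      (M * Y) i j = θ i * Y i j := by
    intro Y i j
    rw [Matrix.mul_apply, Finset.sum_eq_single i]
    · rw [hθ i]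
    · intro k _ hk
      rw [hAdiag (Ne.symm hk), zero_mul]
    · intro h; exact absurd (Finset.mem_univ _) h
  have hR : ∀ (Y : Matrix (Fin (d + 1)) (Fin (d + 1)) K) (i j : Fin (d + 1)),
      (Y * M) i j = Y i j * θ j := by
    intro Y i j
    rw [Matrix.mul_apply, Finset.sum_eq_single j]
    · rw [hθ j]
    · intro k _ hk
      rw [hAdiag hk, mul_zero]
    · intro h; exact absurd (Finset.mem_univ _) h
  -- convert the operator identity to a matrix identity
  rw [← (LinearMap.toMatrix c c).injective.eq_iff]
  simp only [pow_two, map_sub, map_add, map_smul, LinearMap.toMatrix_mul, ← hM, ← hN]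
  set X : Matrix (Fin (d + 1)) (Fin (d + 1)) K :=
    M * M * N - β • (M * N * M) + N * (M * M) - γ • (M * N + N * M) - ϱ • N with hX
  have hXentry : ∀ i j : Fin (d + 1),
      X i j = (θ i ^ 2 - β * θ i * θ j + θ j ^ 2 - γ * (θ i + θ j) - ϱ) * N i j := by
    intro i j
    simp only [hX, Matrix.sub_apply, Matrix.add_apply, Matrix.smul_apply, smul_eq_mul]
    rw [show M * M * N = M * (M * N) from mul_assoc _ _ _,
      show N * (M * M) = N * M * M from (mul_assoc _ _ _).symm]
    simp only [hL, hR]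
    ring
  have hentry : ∀ i j : Fin (d + 1),
      (M * X) i j - (X * M) i j = (θ i - θ j) * (P (θ i) (θ j)) * N i j := by
    intro i j
    rw [hL, hR, hXentry, hP]
    ring
  constructor
  · intro hc i hi
    have h := hentry ⟨i, by omega⟩ ⟨i + 1, by omega⟩
    rw [hc, sub_self] at h
    have hN0 : N ⟨i, by omega⟩ ⟨i + 1, by omega⟩ ≠ 0 := hBtri.2 _ _ (Or.inl rfl)
    have hth : θ ⟨i, by omega⟩ - θ ⟨i + 1, by omega⟩ ≠ 0 :=
      sub_ne_zero_of_ne (hdist i hi)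
    rcases mul_eq_zero.mp h.symm with h' | h'
    · rcases mul_eq_zero.mp h' with h'' | h''
      · exact absurd h'' hth
      · exact h''
    · exact absurd h' hN0
  · intro hp
    ext i j
    rw [← sub_eq_zero, hentry i j]
    rcases lt_trichotomy ((i : ℕ) + 1) (j : ℕ) with h | h | h
    · rw [hBtri.1 i j (Or.inl h), mul_zero]
    · have hid : (i : ℕ) < d := by have := j.isLt; omega
      have hpe := hp (i : ℕ) hid
      have e1 : (⟨(i : ℕ), by omega⟩ : Fin (d + 1)) = i := Fin.eta i i.isLt
      have e2 : (⟨(i : ℕ) + 1, by omega⟩ : Fin (d + 1)) = j := by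
        apply Fin.ext; simpa using h
      rw [e1, e2] at hpe
      rw [hpe, mul_zero, zero_mul]
    · rcases lt_trichotomy ((j : ℕ) + 1) (i : ℕ) with h2 | h2 | h2
      · rw [hBtri.1 i j (Or.inr h2), mul_zero]
      · have hjd : (j : ℕ) < d := by have := i.isLt; omega
        have hpe := hp (j : ℕ) hjd
        have e1 : (⟨(j : ℕ), by omega⟩ : Fin (d + 1)) = j := Fin.eta j j.isLt
        have e2 : (⟨(j : ℕ) + 1, by omega⟩ : Fin (d + 1)) = i := by
          apply Fin.ext; simpa using h2
        rw [e1, e2] at hpe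
        have hsym : P (θ i) (θ j) = P (θ j) (θ i) := by rw [hP, hP]; ring
        rw [hsym, hpe, mul_zero, zero_mul]
      · have : i = j := Fin.ext (by omega)
        rw [this, sub_self, zero_mul, zero_mul]
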